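/- Let G be a group acting on a set X, let n be a natural number, let d : Fin (2n+3) → X, and let σ be a permutation of Fin (n+1). Suppose: (i) for every i ≤ n there exists η_i ∈ G with η_i • d_{2i} = d_{2i+1}; and (ii) for every i ≤ n there exists f_i ∈ G with f_i • d_{2i} = d_{2σ(i)+2} and f_i • d_{2i+1} = d_{2σ(i)+1}. Then there exists an element g of the commutator subgroup of G such that g • d_0 = d_{2n+2}. -/

import Mathlib

/-- If `d : Fin (2n+3) → X` and `σ` is a permutation of `Fin (n+1)` such that
some `η_i ∈ G` sends `d (2i)` to `d (2i+1)` and some `f_i ∈ G` sends `d (2i)` to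
`d (2σ(i)+2)` and `d (2i+1)` to `d (2σ(i)+1)`, then some element of the commutator
subgroup of `G` sends `d 0` to `d (2n+2)`. -/
theorem stmt4 {G X : Type*} [Group G] [MulAction G X] (n : ℕ)
    (d : Fin (2 * n + 3) → X) (σ : Equiv.Perm (Fin (n + 1)))
    (h1 : ∀ i : Fin (n + 1), ∃ η : G,
      η • d ⟨2 * i.val, by have := i.isLt; omega⟩ = d ⟨2 * i.val + 1, by have := i.isLt; omega⟩)
    (h2 : ∀ i : Fin (n + 1), ∃ f : G,
      f • d ⟨2 * i.val, by have := i.isLt; omega⟩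
          = d ⟨2 * (σ i).val + 2, by have := (σ i).isLt; omega⟩ ∧
      f • d ⟨2 * i.val + 1, by have := i.isLt; omega⟩
          = d ⟨2 * (σ i).val + 1, by have := (σ i).isLt; omega⟩) :
    ∃ g ∈ commutator G, g • d ⟨0, by omega⟩ = d ⟨2 * n + 2, by omega⟩ := by
  choose η hη using h1
  choose f hf1 hf2 using h2
  set T : Fin (n + 1) → Abelianization G :=
    fun j => (Abelianization.of (η (σ.symm j)))⁻¹ * Abelianization.of (η j) with hT
  have key : ∀ k : ℕ, (hk : k ≤ n + 1) → ∃ g : G,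
      Abelianization.of g
        = ∏ j ∈ Finset.univ.filter (fun j : Fin (n + 1) => j.val < k), T j ∧
      g • d ⟨0, by omega⟩ = d ⟨2 * k, by omega⟩ := by
    intro k
    induction k with
    | zero =>
      intro _
      refine ⟨1, ?_, ?_⟩
      · simp
      · rw [one_smul]
    | succ k ih =>
      intro hk
      obtain ⟨g, hg, hgd⟩ := ih (by omega)
      set K : Fin (n + 1) := ⟨k, by omega⟩ with hK
      set i : Fin (n + 1) := σ.symm K with hi
      have hσi : σ i = K := σ.apply_symm_apply K
      refine ⟨f i * (η i)⁻¹ * (f i)⁻¹ * η K * g, ?_, ?_⟩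
      · have hfilter : Finset.univ.filter (fun j : Fin (n + 1) => j.val < k + 1)
            = insert K (Finset.univ.filter (fun j : Fin (n + 1) => j.val < k)) := by
          ext j
          simp only [Finset.mem_filter, Finset.mem_univ, true_and, Finset.mem_insert,
            Fin.ext_iff, hK]
          omega
        rw [hfilter, Finset.prod_insert (by simp [hK]), ← hg]
        simp only [map_mul, map_inv, hT]
        have : ∀ a b c : Abelianization G, a * b⁻¹ * a⁻¹ * c = b⁻¹ * c := by
          intro a b c
          rw [mul_right_comm a b⁻¹ a⁻¹, mul_inv_cancel, one_mul]
        rw [mul_assoc _ _ (Abelianization.of g), this, mul_assoc]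
      · have e1 : η K • d ⟨2 * k, by omega⟩ = d ⟨2 * k + 1, by omega⟩ := hη K
        have e2 : f i • d ⟨2 * i.val + 1, by have := i.isLt; omega⟩
            = d ⟨2 * k + 1, by omega⟩ := by
          have := hf2 i
          rwa [show (⟨2 * (σ i).val + 1, by have := (σ i).isLt; omega⟩ : Fin (2 * n + 3))
              = ⟨2 * k + 1, by omega⟩ from by rw [Fin.mk_eq_mk, hσi]] at this
        have e3 : η i • d ⟨2 * i.val, by have := i.isLt; omega⟩
            = d ⟨2 * i.val + 1, by have := i.isLt; omega⟩ := hη i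
        have e4 : f i • d ⟨2 * i.val, by have := i.isLt; omega⟩
            = d ⟨2 * k + 2, by omega⟩ := by
          have := hf1 i
          rwa [show (⟨2 * (σ i).val + 2, by have := (σ i).isLt; omega⟩ : Fin (2 * n + 3))
              = ⟨2 * k + 2, by omega⟩ from by rw [Fin.mk_eq_mk, hσi]] at this
        have hidx : (⟨2 * (k + 1), by omega⟩ : Fin (2 * n + 3)) = ⟨2 * k + 2, by omega⟩ := by
          rw [Fin.mk_eq_mk]; omega
        rw [hidx, mul_smul, mul_smul, mul_smul, mul_smul, hgd, e1,
          inv_smul_eq_iff.mpr e2.symm, inv_smul_eq_iff.mpr e3.symm, e4]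
  obtain ⟨g, hg, hgd⟩ := key (n + 1) le_rfl
  have hfilter : Finset.univ.filter (fun j : Fin (n + 1) => j.val < n + 1) = Finset.univ := by
    ext j; simp [j.isLt, Fin.is_le]
  have hone : Abelianization.of g = 1 := by
    rw [hg, hfilter, hT, Finset.prod_mul_distrib, Finset.prod_inv_distrib,
      Equiv.prod_comp σ.symm (fun j => Abelianization.of (η j)), inv_mul_cancel]
  refine ⟨g, ?_, ?_⟩
  · exact (QuotientGroup.eq_one_iff g).mp hone
  · rwa [show (⟨2 * (n + 1), by omega⟩ : Fin (2 * n + 3)) = ⟨2 * n + 2, by omega⟩ from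
      by rw [Fin.mk_eq_mk]; omega] at hgd
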